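/- Let Z : G × G → A_X be a cotranslation and γ : G → A_X a group morphism such that γ(k) ∘ Z(g, h) = Z(g, h) ∘ γ(k) for all g, h, k ∈ G. Then W : G × G → A_X defined by W(g, h) = Z(g, h) ∘ γ(h) is a cotranslation. -/
import Mathlib

/-- If `Z` is a cotranslation and `γ` a group morphism commuting with all `Z(g,h)`,
then `W(g,h) = Z(g,h) ∘ γ(h)` is a cotranslation. -/
theorem cotranslation_mul_commuting_hom {G X : Type*} [Group G]
    (Z : G → G → Equiv.Perm X)
    (hZ : ∀ g h k : G, Z g (k * h) = Z (h * g) k * Z g h)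
    (γ : G →* Equiv.Perm X)
    (hcomm : ∀ g h k : G, γ k * Z g h = Z g h * γ k) :
    ∀ g h k : G, (fun g h => Z g h * γ h) g (k * h)
      = (fun g h => Z g h * γ h) (h * g) k * (fun g h => Z g h * γ h) g h := by
  intro g h k
  simp only [hZ, map_mul]
  rw [mul_assoc (Z (h*g) k), ← mul_assoc (Z g h), ← hcomm, mul_assoc, mul_assoc]
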